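/- Fix V ≠ 0, δ = 0, and 0 < A_− ≤ A_+, and define Z(k) = (λ_+(k) + (k + V/2))·A_− − (λ_−(k) + (k − V/2))·A_+ for k ∈ ℝ (this is, up to a nonvanishing factor, the reflection coefficient ρ(k) of the pure two-sided step initial condition). Then: (i) if A_+ = A_−, Z(k) ≠ 0 for every k ∈ ℝ; (ii) if A_+ ≠ A_−, then for k ∈ ℝ one has Z(k) = 0 if and only if k = (V/2)·(A_+ + A_−)/(A_+ − A_−). -/

import Mathlib

/-- The argument of a complex number normalized to lie in `[−π/2, 3π/2)`:
if `arg z ∈ (−π, −π/2)` we add `2π`. -/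
noncomputable def argS (z : ℂ) : ℝ :=
  if Complex.arg z < -(Real.pi / 2) then Complex.arg z + 2 * Real.pi else Complex.arg z

/-- The branch `λ(k;A) = √(r₁r₂)·exp(i(φ₁+φ₂)/2)` of `(k² + A²)^{1/2}`, where
`k − iA = r₁e^{iφ₁}`, `k + iA = r₂e^{iφ₂}` with `φ₁, φ₂ ∈ [−π/2, 3π/2)`;
its branch cut lies along the segment `i[−A,A]` and it is continuous from the
right on the cut. -/
noncomputable def lamBr (A : ℝ) (k : ℂ) : ℂ :=
  ((Real.sqrt (‖k - Complex.I * (A : ℂ)‖ * ‖k + Complex.I * (A : ℂ)‖) : ℝ) : ℂ) *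
    Complex.exp (Complex.I *
      (((argS (k - Complex.I * (A : ℂ)) + argS (k + Complex.I * (A : ℂ))) / 2 : ℝ) : ℂ))

/-- `Z(k) = (λ₊(k) + (k + V/2))·A₋ − (λ₋(k) + (k − V/2))·A₊` for real `k`
(up to a nonvanishing factor, the reflection coefficient of the pure two-sided step
initial condition with `δ = 0`). -/
noncomputable def Zrefl (Am Ap V : ℝ) (k : ℝ) : ℂ :=
  (lamBr Ap ((k : ℂ) + (V : ℂ) / 2) + ((k : ℂ) + (V : ℂ) / 2)) * (Am : ℂ)
    - (lamBr Am ((k : ℂ) - (V : ℂ) / 2) + ((k : ℂ) - (V : ℂ) / 2)) * (Ap : ℂ)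

/-- Real signed square-root branch: `F A x = λ(x;A) + x` on the real line. -/
noncomputable def Fbr (A x : ℝ) : ℝ :=
  (if 0 ≤ x then Real.sqrt (x ^ 2 + A ^ 2) else -Real.sqrt (x ^ 2 + A ^ 2)) + x

lemma Fbr_sq (A x : ℝ) : Fbr A x ^ 2 = 2 * x * Fbr A x + A ^ 2 := by
  have hs : Real.sqrt (x ^ 2 + A ^ 2) ^ 2 = x ^ 2 + A ^ 2 :=
    Real.sq_sqrt (by positivity)
  unfold Fbr
  split_ifs <;> nlinarith [hs]

lemma Fbr_ne_zero (A x : ℝ) (hA : A ≠ 0) : Fbr A x ≠ 0 := by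
  intro h
  have := Fbr_sq A x
  rw [h] at this
  simp at this
  exact hA (pow_eq_zero_iff (n := 2) (by norm_num) |>.mp this.symm)

lemma Fbr_scale (A : ℝ) (hA : 0 < A) (c : ℝ) : Fbr A (c * A) = A * Fbr 1 c := by
  have h1 : (c * A) ^ 2 + A ^ 2 = A ^ 2 * (c ^ 2 + 1 ^ 2) := by ring
  have h2 : Real.sqrt ((c * A) ^ 2 + A ^ 2) = A * Real.sqrt (c ^ 2 + 1 ^ 2) := by
    rw [h1, Real.sqrt_mul (by positivity), Real.sqrt_sq hA.le]
  have h3 : (0 ≤ c * A) ↔ 0 ≤ c := by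
    constructor
    · intro h; nlinarith
    · intro h; positivity
  unfold Fbr
  rw [h2]
  by_cases hc : 0 ≤ c
  · rw [if_pos (h3.mpr hc), if_pos hc]; ring
  · rw [if_neg (fun h => hc (h3.mp h)), if_neg hc]; ring

/-- On the real line, the branch `lamBr` is the signed square root. -/
lemma lamBr_real (A : ℝ) (hA : 0 < A) (x : ℝ) :
    lamBr A (x : ℂ) =
      ((if 0 ≤ x then Real.sqrt (x ^ 2 + A ^ 2) else -Real.sqrt (x ^ 2 + A ^ 2) : ℝ) : ℂ) := by
  set z : ℂ := (x : ℂ) + Complex.I * (A : ℂ) with hzdef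
  have hre : z.re = x := by simp [hzdef]
  have him : z.im = A := by simp [hzdef]
  have hconjz : (x : ℂ) - Complex.I * (A : ℂ) = (starRingEnd ℂ) z := by
    apply Complex.ext <;> simp [hzdef]
  set θ := Complex.arg z with hθdef
  have hπ : (0:ℝ) < Real.pi := Real.pi_pos
  have hθnonneg : 0 ≤ θ := Complex.arg_nonneg_iff.mpr (by rw [him]; exact hA.le)
  have hθne0 : θ ≠ 0 := by
    intro h
    have := Complex.arg_eq_zero_iff.mp h
    rw [him] at this
    exact hA.ne' this.2
  have hθpos : 0 < θ := lt_of_le_of_ne hθnonneg (Ne.symm hθne0)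
  have hθnepi : θ ≠ Real.pi := by
    intro h
    have := Complex.arg_eq_pi_iff.mp h
    rw [him] at this
    exact hA.ne' this.2
  have hargconj : Complex.arg ((starRingEnd ℂ) z) = -θ := by
    rw [Complex.arg_conj, if_neg hθnepi]
  have habs : ‖z‖ = Real.sqrt (x ^ 2 + A ^ 2) := by
    rw [Complex.norm_def, Complex.normSq_apply, hre, him]
    ring_nf
  have habsconj : ‖(starRingEnd ℂ) z‖ = Real.sqrt (x ^ 2 + A ^ 2) := by
    rw [Complex.norm_conj]; exact habs
  have hsqrt : Real.sqrt (‖(x:ℂ) - Complex.I * (A:ℂ)‖ *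
      ‖(x:ℂ) + Complex.I * (A:ℂ)‖) = Real.sqrt (x ^ 2 + A ^ 2) := by
    rw [hconjz, ← hzdef, habsconj, habs, Real.sqrt_mul_self (Real.sqrt_nonneg _)]
  have hargSz : argS z = θ := by
    unfold argS
    rw [← hθdef, if_neg (by push_neg; nlinarith)]
  unfold lamBr
  rw [hsqrt, hconjz, ← hzdef, hargSz]
  by_cases hx : 0 ≤ x
  · -- θ ≤ π/2, so argS (conj z) = -θ
    have hθle : θ ≤ Real.pi / 2 :=
      Complex.arg_le_pi_div_two_iff.mpr (Or.inl (by rw [hre]; exact hx))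
    have hargSc : argS ((starRingEnd ℂ) z) = -θ := by
      unfold argS
      rw [hargconj, if_neg (by push_neg; linarith)]
    rw [hargSc, if_pos hx]
    have : ((-θ + θ) / 2 : ℝ) = 0 := by ring
    rw [this]
    simp
  · -- π/2 < θ, so argS (conj z) = -θ + 2π
    have hθgt : Real.pi / 2 < θ := by
      by_contra hle
      push_neg at hle
      rcases Complex.arg_le_pi_div_two_iff.mp hle with h | h
      · rw [hre] at h; exact hx h
      · rw [him] at h; linarith
    have hargSc : argS ((starRingEnd ℂ) z) = -θ + 2 * Real.pi := by
      unfold argS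
      rw [hargconj, if_pos (by linarith)]
    rw [hargSc, if_neg hx]
    have : ((-θ + 2 * Real.pi + θ) / 2 : ℝ) = Real.pi := by ring
    rw [this]
    have hexp : Complex.exp (Complex.I * ((Real.pi : ℝ) : ℂ)) = -1 := by
      rw [mul_comm]; exact Complex.exp_pi_mul_I
    rw [hexp]
    push_cast
    ring

lemma Zrefl_eq (Am Ap V : ℝ) (hm : 0 < Am) (hp : 0 < Ap) (k : ℝ) :
    Zrefl Am Ap V k = ((Am * Fbr Ap (k + V / 2) - Ap * Fbr Am (k - V / 2) : ℝ) : ℂ) := by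
  have h1 : (k : ℂ) + (V : ℂ) / 2 = ((k + V / 2 : ℝ) : ℂ) := by push_cast; ring
  have h2 : (k : ℂ) - (V : ℂ) / 2 = ((k - V / 2 : ℝ) : ℂ) := by push_cast; ring
  rw [Zrefl, h1, h2, lamBr_real Ap hp, lamBr_real Am hm]
  unfold Fbr
  push_cast [apply_ite (fun r : ℝ => (r : ℂ))]
  ring

lemma key_iff (Am Ap V : ℝ) (hm : 0 < Am) (hp : 0 < Ap) (x : ℝ) :
    Am * Fbr Ap x - Ap * Fbr Am (x - V) = 0 ↔ x * (Ap - Am) = V * Ap := by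
  constructor
  · intro h
    set u := Fbr Ap x with hu'
    set v := Fbr Am (x - V) with hv'
    have hu : u ^ 2 = 2 * x * u + Ap ^ 2 := Fbr_sq Ap x
    have hv : v ^ 2 = 2 * (x - V) * v + Am ^ 2 := Fbr_sq Am (x - V)
    have hune : u ≠ 0 := Fbr_ne_zero Ap x hp.ne'
    have hcanc : (Am * u) * (2 * (x * Am - (x - V) * Ap)) = 0 := by
      linear_combination (-(Am ^ 2)) * hu + Ap ^ 2 * hv +
        (Am * u + Ap * v - 2 * (x - V) * Ap) * h
    have hAmu : Am * u ≠ 0 := mul_ne_zero hm.ne' hune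
    have h2 : 2 * (x * Am - (x - V) * Ap) = 0 := by
      rcases mul_eq_zero.mp hcanc with h' | h'
      · exact absurd h' hAmu
      · exact h'
    nlinarith [h2]
  · intro h
    have hxm : x - V = (x / Ap) * Am := by
      field_simp
      nlinarith [h]
    have hxp : x = (x / Ap) * Ap := by field_simp
    have e1 : Fbr Ap x = Ap * Fbr 1 (x / Ap) := by
      conv_lhs => rw [hxp]
      exact Fbr_scale Ap hp _
    have e2 : Fbr Am (x - V) = Am * Fbr 1 (x / Ap) := by
      rw [hxm]; exact Fbr_scale Am hm _
    rw [e1, e2]; ring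

/-- For `V ≠ 0`, `δ = 0`, `0 < A₋ ≤ A₊`: (i) if `A₊ = A₋` then `Z(k) ≠ 0` for every
real `k`; (ii) if `A₊ ≠ A₋` then `Z(k) = 0` iff `k = (V/2)·(A₊ + A₋)/(A₊ − A₋)`. -/
theorem step_reflection_zeros (Am Ap V : ℝ) (hV : V ≠ 0) (hm : 0 < Am) (hmp : Am ≤ Ap) :
    (Ap = Am → ∀ k : ℝ, Zrefl Am Ap V k ≠ 0) ∧
    (Ap ≠ Am → ∀ k : ℝ,
      (Zrefl Am Ap V k = 0 ↔ k = V / 2 * ((Ap + Am) / (Ap - Am)))) := by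
  have hp : 0 < Ap := lt_of_lt_of_le hm hmp
  have hz : ∀ k : ℝ, (Zrefl Am Ap V k = 0 ↔ (k + V / 2) * (Ap - Am) = V * Ap) := by
    intro k
    rw [Zrefl_eq Am Ap V hm hp k, Complex.ofReal_eq_zero]
    have := key_iff Am Ap V hm hp (k + V / 2)
    rw [show k + V / 2 - V = k - V / 2 by ring] at this
    exact this
  constructor
  · intro hEq k hZ
    rw [hz k, hEq] at hZ
    simp at hZ
    rcases hZ with h | h
    · exact hV h
    · exact hm.ne' h
  · intro hNe k
    have hd : Ap - Am ≠ 0 := sub_ne_zero.mpr hNe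
    rw [hz k]
    constructor
    · intro h
      field_simp
      nlinarith [h]
    · intro h
      subst h
      field_simp
      ring
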